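/- For all positive integers n and k such that n - k is odd, the Bernoulli–Stirling number of the second kind vanishes: B_{n,k} = 0. -/

import Mathlib

open Finset

/-- Stirling numbers of the second kind (partition Stirling numbers). -/
def stirling2 : ℕ → ℕ → ℕ
  | 0, 0 => 1
  | 0, _ + 1 => 0
  | _ + 1, 0 => 0
  | n + 1, k + 1 => (k + 1) * stirling2 n (k + 1) + stirling2 n k

/-- Bernoulli–Stirling numbers of the second kind. -/
def bsB (n k : ℕ) : ℚ :=
  ∑ h ∈ Finset.range (n + 1),
    bernoulli h * (n.choose h) * stirling2 (n - h) k * (k : ℚ) ^ h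

lemma key_identity (m k : ℕ) :
    ∑ j ∈ range (k+2), (-1:ℚ)^j * (k+1).choose j * (j:ℚ)^(m+1)
      = (k+1) * ((∑ j ∈ range (k+2), (-1:ℚ)^j * (k+1).choose j * (j:ℚ)^m)
        - ∑ j ∈ range (k+1), (-1:ℚ)^j * k.choose j * (j:ℚ)^m) := by
  have hB : ∑ j ∈ range (k+1), (-1:ℚ)^j * k.choose j * (j:ℚ)^m
      = ∑ j ∈ range (k+2), (-1:ℚ)^j * k.choose j * (j:ℚ)^m := by
    rw [Finset.sum_range_succ _ (k+1), Nat.choose_succ_self]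
    simp
  rw [hB, ← Finset.sum_sub_distrib, Finset.mul_sum]
  rw [Finset.sum_range_succ' (fun j => (-1:ℚ)^j * (k+1).choose j * (j:ℚ)^(m+1)),
      Finset.sum_range_succ'
        (fun j => (k+1) * ((-1:ℚ)^j * (k+1).choose j * (j:ℚ)^m - (-1:ℚ)^j * k.choose j * (j:ℚ)^m))]
  have h0 : ((-1:ℚ)^0 * ((k+1).choose 0 : ℚ) * ((0:ℕ):ℚ)^(m+1)) = 0 := by
    simp
  have h0' : ((k:ℚ)+1) * ((-1:ℚ)^0 * ((k+1).choose 0 : ℚ) * ((0:ℕ):ℚ)^m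
      - (-1:ℚ)^0 * (k.choose 0 : ℚ) * ((0:ℕ):ℚ)^m) = 0 := by
    simp
  rw [h0, h0', add_zero, add_zero]
  refine Finset.sum_congr rfl fun i _ => ?_
  have hc : ((k+1).choose (i+1) : ℚ) - (k.choose (i+1) : ℚ) = (k.choose i : ℚ) := by
    rw [Nat.choose_succ_succ]
    push_cast
    ring
  have hmc : ((k:ℚ)+1) * (k.choose i : ℚ) = ((k+1).choose (i+1) : ℚ) * ((i:ℚ)+1) := by
    have := Nat.add_one_mul_choose_eq k i
    have : ((k+1) * k.choose i : ℕ) = ((k+1).choose (i+1) * (i+1) : ℕ) := this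
    exact_mod_cast congrArg (Nat.cast : ℕ → ℚ) this
  have expand : ((k:ℚ)+1) * ((-1:ℚ)^(i+1) * ((k+1).choose (i+1) : ℚ) * ((i+1:ℕ):ℚ)^m
      - (-1:ℚ)^(i+1) * (k.choose (i+1) : ℚ) * ((i+1:ℕ):ℚ)^m)
      = (-1:ℚ)^(i+1) * (((k:ℚ)+1) * (k.choose i : ℚ)) * ((i+1:ℕ):ℚ)^m := by
    rw [← hc]; ring
  rw [expand, hmc]
  push_cast
  ring

lemma stirling2_formula : ∀ (m k : ℕ), (k.factorial : ℚ) * stirling2 m k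
    = (-1:ℚ)^k * ∑ j ∈ range (k+1), (-1:ℚ)^j * k.choose j * (j:ℚ)^m := by
  intro m
  induction m with
  | zero =>
    intro k
    cases k with
    | zero => simp [stirling2]
    | succ k =>
      have halt : ∑ j ∈ range (k+2), (-1:ℚ)^j * ((k+1).choose j : ℚ) = 0 := by
        have := Int.alternating_sum_range_choose_of_ne (Nat.succ_ne_zero k)
        exact_mod_cast congrArg (Int.cast : ℤ → ℚ) this
      have : ∑ j ∈ range (k+2), (-1:ℚ)^j * ((k+1).choose j : ℚ) * (j:ℚ)^0
          = ∑ j ∈ range (k+2), (-1:ℚ)^j * ((k+1).choose j : ℚ) := by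
        refine Finset.sum_congr rfl fun j _ => by rw [pow_zero, mul_one]
      rw [stirling2]
      rw [this, halt]
      simp
  | succ m ih =>
    intro k
    cases k with
    | zero =>
      rw [stirling2]
      simp
    | succ k =>
      rw [stirling2]
      push_cast
      rw [key_identity m k]
      have h1 := ih (k+1)
      have h2 := ih k
      push_cast at h1 h2
      have hfac : ((k+1).factorial : ℚ) = ((k:ℚ)+1) * (k.factorial : ℚ) := by
        rw [Nat.factorial_succ]; push_cast; ring
      rw [hfac] at h1 ⊢
      linear_combination ((k:ℚ)+1) * h1 + ((k:ℚ)+1) * h2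

lemma bernoulli_poly_eval (n : ℕ) (x : ℚ) : (Polynomial.bernoulli n).eval x
    = ∑ i ∈ range (n+1), bernoulli i * n.choose i * x ^ (n - i) := by
  rw [Polynomial.bernoulli, Polynomial.eval_finset_sum]
  refine Finset.sum_congr rfl fun i _ => ?_
  rw [Polynomial.eval_monomial]

lemma bernoulli_eval_neg (n : ℕ) (x : ℚ) : (Polynomial.bernoulli n).eval (-x)
    = (-1:ℚ)^n * ((Polynomial.bernoulli n).eval x + n * x ^ (n-1)) := by
  rw [bernoulli_poly_eval, bernoulli_poly_eval]
  have key : ∀ i ∈ range (n+1),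
      bernoulli i * n.choose i * (-x) ^ (n - i)
      = (-1:ℚ)^n * (bernoulli' i * n.choose i * x ^ (n - i)) := by
    intro i hi
    rw [mem_range] at hi
    have hle : i ≤ n := Nat.lt_succ_iff.mp hi
    have hpow : (-x : ℚ) ^ (n - i) = (-1:ℚ)^(n-i) * x ^ (n-i) := by
      rw [neg_pow]
    have hsign : (-1:ℚ)^(n-i) = (-1:ℚ)^n * (-1:ℚ)^i := by
      have : (-1:ℚ)^(n-i) * (-1:ℚ)^i = (-1:ℚ)^n := by
        rw [← pow_add, Nat.sub_add_cancel hle]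
      have h2 : ((-1:ℚ)^i) * ((-1:ℚ)^i) = 1 := by
        rw [← pow_add, ← two_mul, pow_mul]; norm_num
      calc (-1:ℚ)^(n-i) = (-1:ℚ)^(n-i) * (((-1:ℚ)^i) * ((-1:ℚ)^i)) := by rw [h2, mul_one]
        _ = ((-1:ℚ)^(n-i) * (-1:ℚ)^i) * (-1:ℚ)^i := by ring
        _ = (-1:ℚ)^n * (-1:ℚ)^i := by rw [this]
    have hb : (-1:ℚ)^i * bernoulli i = bernoulli' i := by
      rw [bernoulli'_eq_bernoulli]
    rw [hpow, hsign, ← hb]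
    ring
  rw [Finset.sum_congr rfl key, ← Finset.mul_sum]
  congr 1
  have diff : ∑ i ∈ range (n+1), bernoulli' i * n.choose i * x ^ (n - i)
      - ∑ i ∈ range (n+1), bernoulli i * n.choose i * x ^ (n - i)
      = n * x ^ (n-1) := by
    rw [← Finset.sum_sub_distrib]
    have : ∀ i ∈ range (n+1), bernoulli' i * n.choose i * x ^ (n-i)
        - bernoulli i * n.choose i * x ^ (n-i)
        = (bernoulli' i - bernoulli i) * n.choose i * x ^ (n-i) := by
      intro i _; ring
    rw [Finset.sum_congr rfl this]
    rw [Finset.sum_eq_single 1]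
    · simp [bernoulli'_one, bernoulli_one]; norm_num
    · intro i _ hi
      rw [bernoulli_eq_bernoulli'_of_ne_one hi]
      ring
    · intro h1
      rw [mem_range, not_lt] at h1
      have hn0 : n = 0 := by omega
      subst hn0
      simp
  linarith [diff]

lemma bernoulli_reflect (n : ℕ) (x : ℚ) : (Polynomial.bernoulli n).eval (1 - x)
    = (-1:ℚ)^n * (Polynomial.bernoulli n).eval x := by
  have h1 : (1 : ℚ) - x = 1 + (-x) := by ring
  rw [h1, Polynomial.bernoulli_eval_one_add, bernoulli_eval_neg]
  cases n with
  | zero => simp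
  | succ m =>
    have : (-x : ℚ) ^ (m + 1 - 1) = (-1:ℚ)^m * x ^ m := by
      rw [Nat.add_sub_cancel, neg_pow]
    rw [this, Nat.add_sub_cancel]
    ring

theorem bsB_eq_zero_of_odd (n k : ℕ) (hn : 0 < n) (hk : 0 < k)
    (h : Odd ((n : ℤ) - k)) : bsB n k = 0 := by
  have hk0 : (k : ℚ) ≠ 0 := Nat.cast_ne_zero.mpr hk.ne'
  set S : ℚ := ∑ j ∈ range (k+1),
      (-1:ℚ)^j * k.choose j * (Polynomial.bernoulli n).eval ((j:ℚ) / k) with hS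
  -- step 1: factorial * bsB = (-1)^k * k^n * S
  have step1 : (k.factorial : ℚ) * bsB n k = (-1:ℚ)^k * (k:ℚ)^n * S := by
    rw [bsB, Finset.mul_sum]
    have lhs_eq : ∀ h' ∈ range (n+1),
        (k.factorial : ℚ) * (bernoulli h' * (n.choose h') * stirling2 (n - h') k * (k:ℚ)^h')
        = ∑ j ∈ range (k+1), bernoulli h' * (n.choose h') *
            ((-1:ℚ)^k * ((-1:ℚ)^j * k.choose j * (j:ℚ)^(n-h'))) * (k:ℚ)^h' := by
      intro h' _
      have e : (k.factorial : ℚ) * (bernoulli h' * (n.choose h') * stirling2 (n - h') k * (k:ℚ)^h')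
          = bernoulli h' * (n.choose h') * ((k.factorial : ℚ) * stirling2 (n - h') k) * (k:ℚ)^h' := by
        ring
      rw [e, stirling2_formula (n - h') k]
      simp only [Finset.mul_sum, Finset.sum_mul]
      try refine Finset.sum_congr rfl fun j _ => by ring
    rw [Finset.sum_congr rfl lhs_eq, Finset.sum_comm]
    rw [hS]
    simp only [Finset.mul_sum]
    refine Finset.sum_congr rfl fun j _ => ?_
    rw [bernoulli_poly_eval]
    simp only [Finset.mul_sum]
    refine Finset.sum_congr rfl fun i hi => ?_
    rw [mem_range, Nat.lt_succ_iff] at hi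
    have hpow : (k:ℚ)^n * ((j:ℚ)/k)^(n-i) = (k:ℚ)^i * (j:ℚ)^(n-i) := by
      rw [div_pow]
      rw [show n = i + (n - i) by omega, pow_add]
      field_simp
      simp
      ring
    calc bernoulli i * (n.choose i) * ((-1:ℚ)^k * ((-1:ℚ)^j * k.choose j * (j:ℚ)^(n-i))) * (k:ℚ)^i
        = (-1:ℚ)^k * ((-1:ℚ)^j * k.choose j * (bernoulli i * (n.choose i) * ((k:ℚ)^i * (j:ℚ)^(n-i)))) := by ring
      _ = (-1:ℚ)^k * ((-1:ℚ)^j * k.choose j * (bernoulli i * (n.choose i) * ((k:ℚ)^n * ((j:ℚ)/k)^(n-i)))) := by rw [hpow]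
      _ = (-1:ℚ)^k * (k:ℚ)^n * ((-1:ℚ)^j * ↑(k.choose j) * (bernoulli i * ↑(n.choose i) * ((j:ℚ)/k)^(n-i))) := by ring
  -- step 2: S = (-1)^(n+k) * S
  have hodd : Odd (n + k) := by
    have : ((n : ℤ) + k) = ((n:ℤ) - k) + 2 * k := by ring
    have h2 : Odd ((n:ℤ) + k) := by
      rw [this]
      exact (h.add_even (even_two_mul _))
    have := h2
    rw [show ((n:ℤ) + k) = ((n + k : ℕ) : ℤ) by push_cast; ring, Int.odd_coe_nat] at this
    exact this
  have step2 : S = -S := by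
    conv_lhs => rw [hS, ← Finset.sum_range_reflect]
    rw [hS]
    rw [← Finset.sum_neg_distrib]
    refine Finset.sum_congr rfl fun j hj => ?_
    rw [mem_range, Nat.lt_succ_iff] at hj
    have h1 : k + 1 - 1 - j = k - j := by omega
    rw [h1]
    have hcast : (((k - j : ℕ)) : ℚ) = (k:ℚ) - j := by
      push_cast [hj]; ring
    have harg : (((k - j : ℕ)) : ℚ) / k = 1 - (j:ℚ)/k := by
      rw [hcast]; field_simp
    rw [Nat.choose_symm hj, harg, bernoulli_reflect]
    have hsign : (-1:ℚ)^(k-j) = (-1:ℚ)^k * (-1:ℚ)^j := by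
      have e1 : (-1:ℚ)^(k-j) * (-1:ℚ)^j = (-1:ℚ)^k := by
        rw [← pow_add, Nat.sub_add_cancel hj]
      have h2 : ((-1:ℚ)^j) * ((-1:ℚ)^j) = 1 := by
        rw [← pow_add, ← two_mul, pow_mul]; norm_num
      calc (-1:ℚ)^(k-j) = (-1:ℚ)^(k-j) * (((-1:ℚ)^j) * ((-1:ℚ)^j)) := by rw [h2, mul_one]
        _ = ((-1:ℚ)^(k-j) * (-1:ℚ)^j) * (-1:ℚ)^j := by ring
        _ = (-1:ℚ)^k * (-1:ℚ)^j := by rw [e1]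
    rw [hsign]
    have hnk : (-1:ℚ)^k * (-1:ℚ)^n = -1 := by
      rw [← pow_add]
      rw [show k + n = n + k by ring]
      exact hodd.neg_one_pow
    calc (-1:ℚ)^k * (-1:ℚ)^j * ↑(k.choose j) * ((-1:ℚ)^n * (Polynomial.bernoulli n).eval ((j:ℚ)/k))
        = ((-1:ℚ)^k * (-1:ℚ)^n) * ((-1:ℚ)^j * ↑(k.choose j) * (Polynomial.bernoulli n).eval ((j:ℚ)/k)) := by ring
      _ = -((-1:ℚ)^j * ↑(k.choose j) * (Polynomial.bernoulli n).eval ((j:ℚ)/k)) := by rw [hnk]; ring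
  have hS0 : S = 0 := by linarith
  have hfac : (k.factorial : ℚ) ≠ 0 := by
    exact_mod_cast Nat.factorial_ne_zero k
  have := step1
  rw [hS0, mul_zero] at this
  exact (mul_eq_zero.mp this).resolve_left hfac
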